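/- For every h < 3, no h-HAM system near-perfectly assembles the discrete Sierpinski triangle S_∞ with respect to its stage sequence S_0 ⊆ S_1 ⊆ S_2 ⊆ ⋯; that is, at least 3 hands are required for near-perfect assembly of the Sierpinski triangle. -/

import Mathlib

/-- A tile type: one glue (a natural number) per side. Glue 0 is the null glue. -/
structure Tile where
  north : ℕ
  east : ℕ
  south : ℕ
  west : ℕ
deriving DecidableEq

/-- An assembly: a nonempty finite set of positions in ℤ², each carrying a tile.
(The `tile` function is only meaningful on `dom`.) -/
structure Assembly where
  dom : Finset (ℤ × ℤ)
  tile : ℤ × ℤ → Tile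
  nonempty : dom.Nonempty

/-- The translation of an assembly by a vector `v`. -/
def Assembly.translate (A : Assembly) (v : ℤ × ℤ) : Assembly where
  dom := A.dom.image (· + v)
  tile := fun p => A.tile (p - v)
  nonempty := A.nonempty.image _

/-- Interaction strength between a tile `t` at position `p` and a tile `u` at
position `p + d`: the strength of the common glue on the abutting sides if the
glues match, and `0` otherwise (also `0` if the positions are not adjacent). -/
def bondStrength (str : ℕ → ℕ) (t u : Tile) (d : ℤ × ℤ) : ℕ :=
  if d = (1, 0) then (if t.east = u.west then str t.east else 0)
  else if d = (-1, 0) then (if t.west = u.east then str t.west else 0)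
  else if d = (0, 1) then (if t.north = u.south then str t.north else 0)
  else if d = (0, -1) then (if t.south = u.north then str t.south else 0)
  else 0

/-- The total strength of the bonds crossing the cut `(P, Q)` of an assembly. -/
def cutStrength (str : ℕ → ℕ) (A : Assembly) (P Q : Finset (ℤ × ℤ)) : ℕ :=
  ∑ p ∈ P, ∑ q ∈ Q, bondStrength str (A.tile p) (A.tile q) (q - p)

/-- An assembly is `τ`-stable if every partition of its domain into two nonempty
parts is crossed by bonds of total strength at least `τ`. -/
def IsStable (str : ℕ → ℕ) (τ : ℕ) (A : Assembly) : Prop :=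
  ∀ P Q : Finset (ℤ × ℤ), P.Nonempty → Q.Nonempty → Disjoint P Q → P ∪ Q = A.dom →
    τ ≤ cutStrength str A P Q

/-- `Combines L C` : the assemblies in the list `L` have pairwise disjoint domains
and `C` is their union. -/
def Combines (L : List Assembly) (C : Assembly) : Prop :=
  List.Pairwise (fun A B => Disjoint A.dom B.dom) L ∧
  (∀ p ∈ C.dom, ∃ A ∈ L, p ∈ A.dom) ∧
  (∀ A ∈ L, A.dom ⊆ C.dom ∧ ∀ p ∈ A.dom, C.tile p = A.tile p)

/-- Producible assemblies of the `h`-HAM system `(T, τ, h)` (with glue strengths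
`str`): the least set of assemblies containing every single tile of `T` placed at
any position of ℤ², and closed under taking `τ`-stable unions of at most `h`
suitably translated producible assemblies with pairwise disjoint domains. -/
inductive HamProducible (T : Finset Tile) (str : ℕ → ℕ) (τ h : ℕ) : Assembly → Prop
  | single (t : Tile) (ht : t ∈ T) (p : ℤ × ℤ) :
      HamProducible T str τ h ⟨{p}, fun _ => t, Finset.singleton_nonempty p⟩
  | combine (L : List (Assembly × (ℤ × ℤ))) (C : Assembly) :
      L.length ≤ h →
      (∀ x ∈ L, HamProducible T str τ h x.1) →
      Combines (L.map fun x => x.1.translate x.2) C →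
      IsStable str τ C →
      HamProducible T str τ h C

/-- The `h`-HAM system `(T, τ, h)` (finitely) self-assembles the shape `X ⊆ ℤ²`:
every producible assembly `A` admits an infinite sequence of producible
assemblies starting at `A`, each obtained from the previous one as a `τ`-stable
union with at most `h - 1` other (suitably translated) producible assemblies,
whose domains union to exactly a translate of `X`. -/
def SelfAssembles (T : Finset Tile) (str : ℕ → ℕ) (τ h : ℕ) (X : Set (ℤ × ℤ)) : Prop :=
  ∀ A, HamProducible T str τ h A →
    ∃ seq : ℕ → Assembly, seq 0 = A ∧
      (∀ n, HamProducible T str τ h (seq n)) ∧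
      (∀ n, ∃ L : List (Assembly × (ℤ × ℤ)), L.length ≤ h - 1 ∧
        (∀ x ∈ L, HamProducible T str τ h x.1) ∧
        Combines (seq n :: L.map fun x => x.1.translate x.2) (seq (n + 1)) ∧
        IsStable str τ (seq (n + 1))) ∧
      ∃ v : ℤ × ℤ, (⋃ n, ((seq n).dom : Set (ℤ × ℤ))) = (· + v) '' X

/-- The `h`-HAM system `(T, τ, h)` near-perfectly assembles the fractal with
increasing stage sequence `P 0 ⊆ P 1 ⊆ ⋯`: it self-assembles `⋃ i, P i`, and
(1) for some constant `c`, every stage `P i` is matched, up to translation, by a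
producible assembly whose domain is a subset of `P i` missing at most `c` points;
(2) for some constant `c'`, every producible assembly has a translate whose
domain is a subset of some stage `P i` missing at most `c'` points. -/
def NearPerfectlyAssembles (T : Finset Tile) (str : ℕ → ℕ) (τ h : ℕ)
    (P : ℕ → Finset (ℤ × ℤ)) : Prop :=
  SelfAssembles T str τ h (⋃ i, (P i : Set (ℤ × ℤ))) ∧
  (∃ c : ℕ, ∀ i : ℕ, ∃ A, HamProducible T str τ h A ∧ ∃ v : ℤ × ℤ,
      (A.translate v).dom ⊆ P i ∧ (P i \ (A.translate v).dom).card ≤ c) ∧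
  (∃ c' : ℕ, ∀ A, HamProducible T str τ h A → ∃ (v : ℤ × ℤ) (i : ℕ),
      (A.translate v).dom ⊆ P i ∧ (P i \ (A.translate v).dom).card ≤ c')

/-- Stages of the discrete (non-tree) Sierpinski triangle:
`S_0 = {(0,0),(-1,0),(0,1),(-1,1)}` and
`S_{i+1} = S_i ∪ (S_i + 2^i·(1,2)) ∪ (S_i + 2^i·(-1,2))`. -/
def sierpTri : ℕ → Finset (ℤ × ℤ)
  | 0 => {(0, 0), (-1, 0), (0, 1), (-1, 1)}
  | i + 1 =>
      sierpTri i ∪ (sierpTri i).image (· + ((2 : ℤ) ^ i, 2 ^ (i + 1))) ∪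
        (sierpTri i).image (· + (-(2 : ℤ) ^ i, 2 ^ (i + 1)))

/-- The discrete Sierpinski triangle `S_∞ = ⋃ i, S_i`. -/
def sierpTriInf : Set (ℤ × ℤ) := ⋃ i, (sierpTri i : Set (ℤ × ℤ))

/-- The offset set `V` for the Sierpinski carpet. -/
def carpetV : Finset (ℤ × ℤ) := {(1,0), (0,1), (0,2), (2,0), (1,2), (2,1), (2,2)}

/-- Stages of the discrete Sierpinski carpet:
`C_0 = {(0,0)}` and `C_{i+1} = C_i ∪ ⋃_{v ∈ V} (C_i + 3^i·v)`. -/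
def sierpCarpet : ℕ → Finset (ℤ × ℤ)
  | 0 => {(0, 0)}
  | i + 1 =>
      sierpCarpet i ∪ carpetV.biUnion fun v =>
        (sierpCarpet i).image (· + ((3 : ℤ) ^ i * v.1, (3 : ℤ) ^ i * v.2))

/-- The discrete Sierpinski carpet `C_∞ = ⋃ i, C_i`. -/
def sierpCarpetInf : Set (ℤ × ℤ) := ⋃ i, (sierpCarpet i : Set (ℤ × ℤ))

/-- The scale-factor-`c` version of a shape `X ⊆ ℤ²`: each point of `X` becomes a
`c × c` block (membership via floor division of both coordinates by `c`). -/
def scaleShape (c : ℤ) (X : Set (ℤ × ℤ)) : Set (ℤ × ℤ) :=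
  {p | (Int.fdiv p.1 c, Int.fdiv p.2 c) ∈ X}

lemma sierpTri_bounds : ∀ i, ∀ p ∈ sierpTri i,
    -(2:ℤ)^i ≤ p.1 ∧ p.1 < 2^i ∧ 0 ≤ p.2 ∧ p.2 < 2^(i+1) := by
  intro i
  induction i with
  | zero => decide
  | succ i ih =>
    have e1 : (2:ℤ)^(i+1) = 2^i + 2^i := by ring
    have e2 : (2:ℤ)^(i+2) = 2^(i+1) + 2^(i+1) := by ring
    have h2i : (0:ℤ) < 2^i := by positivity
    have h2i1 : (0:ℤ) < 2^(i+1) := by positivity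
    intro p hp
    simp only [sierpTri, Finset.mem_union, Finset.mem_image] at hp
    rcases hp with (hp | ⟨q, hq, rfl⟩) | ⟨q, hq, rfl⟩
    · obtain ⟨h1, h2, h3, h4⟩ := ih p hp
      exact ⟨by linarith, by linarith, h3, by linarith⟩
    · obtain ⟨h1, h2, h3, h4⟩ := ih q hq
      simp only [Prod.fst_add, Prod.snd_add]
      exact ⟨by linarith, by linarith, by linarith, by linarith⟩
    · obtain ⟨h1, h2, h3, h4⟩ := ih q hq
      simp only [Prod.fst_add, Prod.snd_add]
      exact ⟨by linarith, by linarith, by linarith, by linarith⟩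

lemma sierpTri_card : ∀ i, (sierpTri i).card = 4 * 3 ^ i := by
  intro i
  induction i with
  | zero => decide
  | succ i ih =>
    have h2i : (0:ℤ) < 2^i := by positivity
    have hinj : Function.Injective (· + ((2:ℤ)^i, (2:ℤ)^(i+1))) := add_left_injective _
    have hinj' : Function.Injective (· + (-(2:ℤ)^i, (2:ℤ)^(i+1))) := add_left_injective _
    have hd1 : Disjoint (sierpTri i) ((sierpTri i).image (· + ((2:ℤ)^i, 2^(i+1)))) := by
      rw [Finset.disjoint_right]
      rintro p hp' hp
      obtain ⟨q, hq, rfl⟩ := Finset.mem_image.mp hp'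
      have h1 := (sierpTri_bounds i _ hp).2.2.2
      have h2 := (sierpTri_bounds i q hq).2.2.1
      simp only [Prod.snd_add] at h1
      linarith
    have hd2 : Disjoint (sierpTri i) ((sierpTri i).image (· + (-(2:ℤ)^i, 2^(i+1)))) := by
      rw [Finset.disjoint_right]
      rintro p hp' hp
      obtain ⟨q, hq, rfl⟩ := Finset.mem_image.mp hp'
      have h1 := (sierpTri_bounds i _ hp).2.2.2
      have h2 := (sierpTri_bounds i q hq).2.2.1
      simp only [Prod.snd_add] at h1
      linarith
    have hd3 : Disjoint ((sierpTri i).image (· + ((2:ℤ)^i, 2^(i+1))))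
        ((sierpTri i).image (· + (-(2:ℤ)^i, 2^(i+1)))) := by
      rw [Finset.disjoint_left]
      rintro p hp hp'
      obtain ⟨q, hq, rfl⟩ := Finset.mem_image.mp hp
      obtain ⟨r, hr, he⟩ := Finset.mem_image.mp hp'
      have h1 := (sierpTri_bounds i q hq).1
      have h2 := (sierpTri_bounds i r hr).2.1
      have : r.1 + -(2:ℤ)^i = q.1 + 2^i := congrArg Prod.fst he
      linarith
    rw [sierpTri, Finset.card_union_of_disjoint, Finset.card_union_of_disjoint hd1,
      Finset.card_image_of_injective _ hinj, Finset.card_image_of_injective _ hinj', ih]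
    · ring
    · rw [Finset.disjoint_union_left]; exact ⟨hd2, hd3⟩

lemma sierpTri_mono : Monotone fun i => sierpTri i := by
  apply monotone_nat_of_le_succ
  intro i
  simp only [sierpTri]
  exact (Finset.subset_union_left).trans Finset.subset_union_left |>.trans (le_refl _)

lemma cover_card (L : List Assembly) (s : Finset (ℤ × ℤ))
    (h : ∀ p ∈ s, ∃ A ∈ L, p ∈ A.dom) :
    s.card ≤ (L.map fun A => A.dom.card).sum := by
  induction L generalizing s with
  | nil =>
    have : s = ∅ := by
      ext p; simp only [Finset.notMem_empty, iff_false]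
      intro hp
      obtain ⟨A, hA, _⟩ := h p hp
      exact absurd hA (List.not_mem_nil (a := A))
    simp [this]
  | cons A L ih =>
    have hsub : s ⊆ A.dom ∪ (s \ A.dom) := by
      intro p hp
      by_cases hpA : p ∈ A.dom
      · exact Finset.mem_union_left _ hpA
      · exact Finset.mem_union_right _ (Finset.mem_sdiff.mpr ⟨hp, hpA⟩)
    have h2 : (s \ A.dom).card ≤ (L.map fun A => A.dom.card).sum := by
      apply ih
      intro p hp
      obtain ⟨hps, hpA⟩ := Finset.mem_sdiff.mp hp
      obtain ⟨B, hB, hpB⟩ := h p hps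
      rcases List.mem_cons.mp hB with rfl | hB
      · exact absurd hpB hpA
      · exact ⟨B, hB, hpB⟩
    calc s.card ≤ (A.dom ∪ (s \ A.dom)).card := Finset.card_le_card hsub
      _ ≤ A.dom.card + (s \ A.dom).card := Finset.card_union_le _ _
      _ ≤ A.dom.card + (L.map fun A => A.dom.card).sum := by omega
      _ = ((A :: L).map fun A => A.dom.card).sum := by simp

lemma translate_card (A : Assembly) (v : ℤ × ℤ) :
    (A.translate v).dom.card = A.dom.card :=
  Finset.card_image_of_injective _ (add_left_injective v)

lemma producible_card_le {T : Finset Tile} {str : ℕ → ℕ} {τ h : ℕ} (hh : h ≤ 2) {c' : ℕ}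
    (hc : ∀ A, HamProducible T str τ h A → ∃ (v : ℤ × ℤ) (i : ℕ),
      (A.translate v).dom ⊆ sierpTri i ∧ (sierpTri i \ (A.translate v).dom).card ≤ c')
    (i₀ : ℕ) (hi₀ : c' < 4 * 3 ^ i₀) :
    ∀ A, HamProducible T str τ h A → A.dom.card ≤ 4 * 3 ^ i₀ := by
  intro A hA
  induction hA with
  | single t ht p =>
    have h1 : 0 < 4 * 3 ^ i₀ := by positivity
    simp only [Finset.card_singleton]
    exact h1
  | combine L C hlen hprod hcomb hstab IH =>
    by_contra hgt
    push_neg at hgt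
    have hC : HamProducible T str τ h C := .combine L C hlen hprod hcomb hstab
    obtain ⟨v, j, hsub, hdiff⟩ := hc C hC
    have hct : (C.translate v).dom.card = C.dom.card := translate_card C v
    -- upper bound: C fits inside sierpTri j
    have hub : C.dom.card ≤ 4 * 3 ^ j := by
      rw [← hct, ← sierpTri_card j]
      exact Finset.card_le_card hsub
    -- lower bound: misses at most c'
    have hlb : 4 * 3 ^ j ≤ C.dom.card + c' := by
      have := Finset.card_sdiff_add_card_eq_card hsub
      rw [sierpTri_card j, hct] at this
      omega
    -- j ≥ i₀ + 1
    have hj : i₀ < j := by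
      by_contra hjle
      push_neg at hjle
      have : (4:ℕ) * 3 ^ j ≤ 4 * 3 ^ i₀ :=
        Nat.mul_le_mul_left 4 (Nat.pow_le_pow_right (by norm_num) hjle)
      omega
    have hjpow : 4 * 3 ^ (i₀ + 1) ≤ 4 * 3 ^ j :=
      Nat.mul_le_mul_left 4 (Nat.pow_le_pow_right (by norm_num) hj)
    -- C is covered by at most 2 pieces, each of size ≤ 4 * 3 ^ i₀
    have hcov : C.dom.card ≤ ((L.map fun x => x.1.translate x.2).map fun A => A.dom.card).sum :=
      cover_card _ _ hcomb.2.1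
    have hsum : ((L.map fun x => x.1.translate x.2).map fun A => A.dom.card).sum
        ≤ L.length * (4 * 3 ^ i₀) := by
      rw [List.map_map]
      have hlen' : ((L.map fun x => (x.1.translate x.2).dom.card)).length = L.length := by
        simp
      calc (L.map ((fun A => A.dom.card) ∘ fun x => x.1.translate x.2)).sum
          ≤ (L.map ((fun A => A.dom.card) ∘ fun x => x.1.translate x.2)).length
            * (4 * 3 ^ i₀) := by
            apply List.sum_le_card_nsmul
            intro n hn
            obtain ⟨x, hx, rfl⟩ := List.mem_map.mp hn
            simp only [Function.comp_apply, translate_card]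
            exact IH x hx
        _ = L.length * (4 * 3 ^ i₀) := by simp
    have hlen2 : L.length ≤ 2 := le_trans hlen hh
    have : C.dom.card ≤ 2 * (4 * 3 ^ i₀) :=
      le_trans hcov (le_trans hsum (Nat.mul_le_mul_right _ hlen2))
    have h3 : 4 * 3 ^ (i₀ + 1) = 3 * (4 * 3 ^ i₀) := by ring
    omega

/-- For every `h < 3`, no `h`-HAM system near-perfectly
assembles the discrete Sierpinski triangle `S_∞` with respect to its stage
sequence: at least 3 hands are required. -/
theorem sierpinski_triangle_near_perfect_needs_three_hands :
    ∀ h : ℕ, 0 < h → h < 3 →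
      ∀ (T : Finset Tile) (str : ℕ → ℕ) (τ : ℕ),
        str 0 = 0 → 0 < τ →
        ¬ NearPerfectlyAssembles T str τ h sierpTri := by
  intro h h0 h3 T str τ hstr hτ hnpa
  obtain ⟨hsa, ⟨c, h1⟩, ⟨c', h2⟩⟩ := hnpa
  have hh : h ≤ 2 := by omega
  -- every producible assembly has size at most 4 * 3 ^ c'
  have hi₀ : c' < 4 * 3 ^ c' := by
    have := Nat.lt_pow_self (n := c') (show 1 < 3 by norm_num)
    omega
  have key := producible_card_le hh h2 c' hi₀
  -- but stage i = 4 * 3 ^ c' + c is matched by a producible assembly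
  set N : ℕ := 4 * 3 ^ c' + c with hN
  have hbig : 4 * 3 ^ c' + c < 4 * 3 ^ N := by
    have := Nat.lt_pow_self (n := N) (show 1 < 3 by norm_num)
    omega
  obtain ⟨A, hA, v, hsub, hdiff⟩ := h1 N
  have hlb : 4 * 3 ^ N ≤ A.dom.card + c := by
    have := Finset.card_sdiff_add_card_eq_card hsub
    rw [sierpTri_card N, translate_card A v] at this
    omega
  have := key A hA
  omega
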